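/- For n ∈ ℕ and 0 ≤ k ≤ n/2, the sum ∑_{i=0}^{k} C(n,i) is at most 2^{n·H(k/n)}, where H(p) = -p·log₂(p) - (1-p)·log₂(1-p) is the binary entropy function. -/
import Mathlib


/-- The binary entropy function `H(p) = -p log₂ p - (1-p) log₂ (1-p)`
(with the convention `H(0) = H(1) = 0`, which holds automatically since
`Real.logb 2 0 = 0` in Lean). -/
noncomputable def binEntropy (p : ℝ) : ℝ :=
  -p * Real.logb 2 p - (1 - p) * Real.logb 2 (1 - p)

theorem sum_choose_le_two_rpow_entropy (n k : ℕ) (hk : (k : ℝ) ≤ n / 2) :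
    (∑ i ∈ Finset.range (k + 1), (n.choose i : ℝ)) ≤
      (2 : ℝ) ^ ((n : ℝ) * binEntropy ((k : ℝ) / n)) := by
  rcases Nat.eq_zero_or_pos k with rfl | hk0
  · simp [binEntropy]
  have hn : 0 < n := by
    rcases Nat.eq_zero_or_pos n with rfl | h
    · exfalso
      have : (k : ℝ) ≤ 0 := by simpa using hk
      have : (0:ℝ) < k := by exact_mod_cast hk0
      linarith
    · exact h
  have hnR : (0:ℝ) < n := Nat.cast_pos.mpr hn
  set p : ℝ := (k : ℝ) / n with hp
  have hp0 : 0 < p := div_pos (Nat.cast_pos.mpr hk0) hnR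
  have hphalf : p ≤ 1/2 := by
    rw [hp, div_le_div_iff₀ hnR two_pos]
    linarith
  have h1p : 0 < 1 - p := by linarith
  have hple : p ≤ 1 - p := by linarith
  have hkn : k ≤ n := by
    have : (k : ℝ) ≤ n := by linarith
    exact_mod_cast this
  set Q : ℝ := p ^ k * (1 - p) ^ (n - k) with hQ
  have hQpos : 0 < Q := mul_pos (pow_pos hp0 _) (pow_pos h1p _)
  -- key sum inequality
  have hsum : (∑ i ∈ Finset.range (k + 1), (n.choose i : ℝ)) * Q ≤ 1 := by
    rw [Finset.sum_mul]
    have step1 : ∀ i ∈ Finset.range (k + 1),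
        (n.choose i : ℝ) * Q ≤ p ^ i * (1 - p) ^ (n - i) * (n.choose i : ℝ) := by
      intro i hi
      have hik : i ≤ k := Nat.lt_succ_iff.mp (Finset.mem_range.mp hi)
      have hQle : Q ≤ p ^ i * (1 - p) ^ (n - i) := by
        have e1 : p ^ k = p ^ i * p ^ (k - i) := by rw [← pow_add]; congr 1; omega
        have e2 : (1 - p) ^ (n - i) = (1 - p) ^ (k - i) * (1 - p) ^ (n - k) := by
          rw [← pow_add]; congr 1; omega
        rw [hQ, e1, e2]
        have : p ^ (k - i) ≤ (1 - p) ^ (k - i) := pow_le_pow_left₀ hp0.le hple _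
        calc p ^ i * p ^ (k - i) * (1 - p) ^ (n - k)
            ≤ p ^ i * (1 - p) ^ (k - i) * (1 - p) ^ (n - k) := by
              apply mul_le_mul_of_nonneg_right _ (pow_nonneg h1p.le _)
              exact mul_le_mul_of_nonneg_left this (pow_nonneg hp0.le _)
          _ = p ^ i * ((1 - p) ^ (k - i) * (1 - p) ^ (n - k)) := by ring
      calc (n.choose i : ℝ) * Q ≤ (n.choose i : ℝ) * (p ^ i * (1 - p) ^ (n - i)) := by
            exact mul_le_mul_of_nonneg_left hQle (Nat.cast_nonneg _)
        _ = p ^ i * (1 - p) ^ (n - i) * (n.choose i : ℝ) := by ring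
    calc ∑ i ∈ Finset.range (k + 1), (n.choose i : ℝ) * Q
        ≤ ∑ i ∈ Finset.range (k + 1), p ^ i * (1 - p) ^ (n - i) * (n.choose i : ℝ) :=
          Finset.sum_le_sum step1
      _ ≤ ∑ i ∈ Finset.range (n + 1), p ^ i * (1 - p) ^ (n - i) * (n.choose i : ℝ) := by
          apply Finset.sum_le_sum_of_subset_of_nonneg
          · exact Finset.range_subset_range.mpr (by omega)
          · intro i _ _
            positivity
      _ = (p + (1 - p)) ^ n := (add_pow p (1 - p) n).symm
      _ = 1 := by norm_num
  -- rewrite RHS as Q⁻¹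
  have hrhs : (2 : ℝ) ^ ((n : ℝ) * binEntropy p) = Q⁻¹ := by
    have hnp : (n : ℝ) * p = k := by
      rw [hp]; field_simp
    have hnp' : (n : ℝ) * (1 - p) = ((n - k : ℕ) : ℝ) := by
      rw [Nat.cast_sub hkn]
      rw [hp]; field_simp; try ring
    have hexp : (n : ℝ) * binEntropy p =
        Real.logb 2 p * (-(k : ℝ)) + Real.logb 2 (1 - p) * (-((n - k : ℕ) : ℝ)) := by
      unfold binEntropy
      rw [← hnp, ← hnp']
      ring
    rw [hexp, Real.rpow_add two_pos,
      Real.rpow_mul (by norm_num : (0:ℝ) ≤ 2),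
      Real.rpow_mul (by norm_num : (0:ℝ) ≤ 2),
      Real.rpow_logb two_pos (by norm_num) hp0,
      Real.rpow_logb two_pos (by norm_num) h1p,
      Real.rpow_neg hp0.le, Real.rpow_neg h1p.le,
      Real.rpow_natCast, Real.rpow_natCast, hQ, mul_inv]
  rw [hrhs, ← one_div, le_div_iff₀ hQpos]
  exact hsum
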